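/- Let M be a compact boundaryless smooth manifold, f a C¹ vector field on M with complete flow φ, D ⊂ M a nonempty compact codimension-one submanifold transversal to the flow direction, and I : D → M a continuous map with I(D) ∩ D = ∅. Then every point x ∈ D satisfies the special strong tube condition: there exist λ > 0, a closed set L ⊂ M and a section S = F({λ},L) through x with S = F([0,2λ],L) ∩ D and F([0,λ],L) ∩ I(D) = ∅. -/

import Mathlib

open Set
open scoped Manifold

/-- `S` is a codimension-one submanifold of `M` transversal to the direction of the
vector field `f`: every `p ∈ S` has an open neighbourhood `U` and a `C¹` function
`Φ : U → ℝ` with `S ∩ U = Φ⁻¹(c)` and `dΦ_q(f(q)) ≠ 0` for all `q ∈ S ∩ U`. -/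
def TransversalCodimOne {E : Type*} [NormedAddCommGroup E] [NormedSpace ℝ E]
    {H : Type*} [TopologicalSpace H] (J : ModelWithCorners ℝ E H)
    {M : Type*} [TopologicalSpace M] [ChartedSpace H M]
    (f : (x : M) → TangentSpace J x) (S : Set M) : Prop :=
  ∀ p ∈ S, ∃ (U : Set M) (Φ : M → ℝ) (c : ℝ),
    IsOpen U ∧ p ∈ U ∧ ContMDiffOn J 𝓘(ℝ, ℝ) 1 Φ U ∧
    S ∩ U = U ∩ Φ ⁻¹' {c} ∧
    ∀ q ∈ S ∩ U, mfderiv J 𝓘(ℝ, ℝ) Φ q (f q) ≠ 0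

/-- The tube `F([a,b],L) = {y : φ(t,y) ∈ L for some t ∈ [a,b]}`, where
`F(t,x) = {y : φ(t,y) = x}`. -/
def tube {M : Type*} (φ : ℝ → M → M) (L : Set M) (a b : ℝ) : Set M :=
  {y | ∃ t : ℝ, a ≤ t ∧ t ≤ b ∧ φ t y ∈ L}

/-- `S = F({lam},L) = φ_lam⁻¹(L)` is a section through `x` with bar `L`:  `L` and `S`
are closed, `x ∈ S`, the tube `F([0,2lam],L)` contains a neighbourhood of `x`, and
`F({ν},L) ∩ F({ζ},L) = ∅` for `0 ≤ ν < ζ ≤ 2lam`. -/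
def isSection {M : Type*} [TopologicalSpace M] (φ : ℝ → M → M) (x : M)
    (lam : ℝ) (L : Set M) : Prop :=
  0 < lam ∧ IsClosed L ∧ IsClosed (φ lam ⁻¹' L) ∧ x ∈ φ lam ⁻¹' L ∧
    tube φ L 0 (2 * lam) ∈ nhds x ∧
    ∀ ν ζ : ℝ, 0 ≤ ν → ν < ζ → ζ ≤ 2 * lam → (φ ν ⁻¹' L) ∩ (φ ζ ⁻¹' L) = ∅

/-- A point `x ∈ D` satisfies the special strong tube condition (SSTC): there is a
section `S = F({lam},L)` through `x` with `S = F([0,2lam],L) ∩ D` and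
`F([0,lam],L) ∩ I(D) = ∅`. -/
def satisfiesSSTC {M : Type*} [TopologicalSpace M] (φ : ℝ → M → M) (D : Set M)
    (I : M → M) (x : M) : Prop :=
  ∃ (lam : ℝ) (L : Set M), isSection φ x lam L ∧
    φ lam ⁻¹' L = tube φ L 0 (2 * lam) ∩ D ∧
    tube φ L 0 lam ∩ (I '' D) = ∅

/-- From joint continuity of the flow: if `W` is open and `φ 0 x ∈ W`, there are `δ > 0`
and an open `V ∋ x` with `φ t y ∈ W` for all `y ∈ V`, `|t| ≤ δ`. -/
private lemma flow_nbhd {M : Type*} [TopologicalSpace M] {φ : ℝ → M → M}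
    (hφcont : Continuous fun p : ℝ × M => φ p.1 p.2) {x : M} {W : Set M}
    (hW : IsOpen W) (hx : φ 0 x ∈ W) :
    ∃ δ : ℝ, 0 < δ ∧ ∃ V : Set M, IsOpen V ∧ x ∈ V ∧
      ∀ y ∈ V, ∀ t : ℝ, |t| ≤ δ → φ t y ∈ W := by
  have hK : IsOpen ((fun p : ℝ × M => φ p.1 p.2) ⁻¹' W) := hW.preimage hφcont
  have hmem : ((0 : ℝ), x) ∈ (fun p : ℝ × M => φ p.1 p.2) ⁻¹' W := hx
  obtain ⟨u, v, hu, hv, h0u, hxv, huv⟩ := isOpen_prod_iff.1 hK 0 x hmem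
  obtain ⟨ε, hε, hball⟩ := Metric.isOpen_iff.1 hu 0 h0u
  refine ⟨ε / 2, by positivity, v, hv, hxv, fun y hy t ht => ?_⟩
  have htu : t ∈ u := by
    apply hball
    rw [Metric.mem_ball, Real.dist_eq, sub_zero]
    linarith
  exact huv (Set.mk_mem_prod htu hy)

private lemma aux_sstc {E : Type*} [NormedAddCommGroup E] [NormedSpace ℝ E]
    {H : Type*} [TopologicalSpace H] {J : ModelWithCorners ℝ E H} [J.Boundaryless]
    {M : Type*} [TopologicalSpace M] [T2Space M] [LocallyCompactSpace M] [ChartedSpace H M]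
    [IsManifold J (⊤ : ℕ∞) M]
    (f : (x : M) → TangentSpace J x)
    (hf : ContMDiff J J.tangent 1 (fun x : M => (⟨x, f x⟩ : TangentBundle J M)))
    (φ : ℝ → M → M)
    (hφcont : Continuous fun p : ℝ × M => φ p.1 p.2)
    (hφ0 : ∀ x, φ 0 x = x)
    (hφadd : ∀ t s : ℝ, ∀ x, φ (t + s) x = φ t (φ s x))
    (hφint : ∀ x : M, IsMIntegralCurve (fun t => φ t x) f)
    (D : Set M) (hDclosed : IsClosed D)
    (I : M → M) (hIDcl : IsClosed (I '' D)) (hID : (I '' D) ∩ D = ∅)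
    (x : M) (hx : x ∈ D)
    (U : Set M) (Φ : M → ℝ) (c : ℝ) (hUopen : IsOpen U) (hxU : x ∈ U)
    (hΦ : ContMDiffOn J 𝓘(ℝ, ℝ) 1 Φ U)
    (hlevel : D ∩ U = U ∩ Φ ⁻¹' {c})
    (A : M → ℝ) (hAeq : ∀ z, A z = mfderiv J 𝓘(ℝ, ℝ) Φ z (f z))
    (hApos : 0 < A x) :
    satisfiesSSTC φ D I x := by
  classical
  have hApos2 : 0 < A x := hApos
  -- continuity of the derivative along f
  have hAcont : ContinuousOn A U := by
    have hUu : UniqueMDiffOn J U := hUopen.uniqueMDiffOn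
    have h1 := hΦ.continuousOn_tangentMapWithin le_rfl hUu
    have h2 : Continuous fun z : M => (⟨z, f z⟩ : TangentBundle J M) := hf.continuous
    have h3 : ContinuousOn (fun z : M => tangentMapWithin J 𝓘(ℝ, ℝ) Φ U ⟨z, f z⟩) U :=
      h1.comp h2.continuousOn (fun z hz => hz)
    have hsnd : Continuous fun q : TangentBundle 𝓘(ℝ, ℝ) ℝ => ((tangentBundleModelSpaceHomeomorph 𝓘(ℝ, ℝ)) q).2 := by
      exact (show Continuous (Prod.snd : ℝ × ℝ → ℝ) from continuous_snd).comp
        (tangentBundleModelSpaceHomeomorph 𝓘(ℝ, ℝ)).continuous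
    have h4 : ContinuousOn (fun z : M =>
        ((tangentBundleModelSpaceHomeomorph 𝓘(ℝ, ℝ))
          (tangentMapWithin J 𝓘(ℝ, ℝ) Φ U ⟨z, f z⟩)).2) U :=
      hsnd.comp_continuousOn h3
    refine h4.congr fun z hz => ?_
    have hw : mfderivWithin J 𝓘(ℝ, ℝ) Φ U z = mfderiv J 𝓘(ℝ, ℝ) Φ z :=
      mfderivWithin_of_isOpen hUopen hz
    rw [hAeq]
    simp only [tangentMapWithin, hw, tangentBundleModelSpaceHomeomorph_coe]
    rfl
  -- derivative of Φ along the flow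
  have hDer : ∀ (w : M) (t : ℝ), φ t w ∈ U →
      HasDerivAt (fun s => Φ (φ s w)) (A (φ t w)) t := by
    intro w t hzU
    have hmd : MDifferentiableAt J 𝓘(ℝ, ℝ) Φ (φ t w) :=
      (hΦ.contMDiffAt (hUopen.mem_nhds hzU)).mdifferentiableAt one_ne_zero
    have h1 := hφint w t
    have h2 := hmd.hasMFDerivAt.comp t h1
    rw [hasMFDerivAt_iff_hasFDerivAt] at h2
    have h3 : HasDerivAt (Φ ∘ fun s => φ s w) (((mfderiv J 𝓘(ℝ, ℝ) Φ (φ t w)).comp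
        ((1 : ℝ →L[ℝ] ℝ).smulRight (f (φ t w)))) 1 : ℝ) t := by
      refine (show HasFDerivAt _ _ t from ?_)
      refine h2.congr_fderiv ?_
      ext
      simp
      exact (ContinuousLinearMap.map_smul _ _ _)
    have hv : A (φ t w) = ((mfderiv J 𝓘(ℝ, ℝ) Φ (φ t w)).comp
        ((1 : ℝ →L[ℝ] ℝ).smulRight (f (φ t w)))) 1 := by
      rw [hAeq, ContinuousLinearMap.comp_apply, ContinuousLinearMap.smulRight_apply,
        ContinuousLinearMap.one_apply, one_smul]
    rw [show (fun s => Φ (φ s w)) = Φ ∘ (fun s => φ s w) from rfl, hv]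
    exact h3
  have hΦx : Φ x = c := by
    have : x ∈ U ∩ Φ ⁻¹' {c} := hlevel ▸ (⟨hx, hxU⟩ : x ∈ D ∩ U)
    exact this.2
  set m : ℝ := A x / 2 with hm_def
  have hm : 0 < m := by rw [hm_def]; linarith
  set G : Set M := (I '' D)ᶜ with hG_def
  have hGopen : IsOpen G := hIDcl.isOpen_compl
  have hDG : D ⊆ G := fun z hz hz' => by
    have : z ∈ (I '' D) ∩ D := ⟨hz', hz⟩
    simp [hID] at this
  set W₁ : Set M := (U ∩ A ⁻¹' Ioi m) ∩ G with hW₁_def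
  have hW₁open : IsOpen W₁ :=
    (hAcont.isOpen_inter_preimage hUopen isOpen_Ioi).inter hGopen
  have hxW₁ : x ∈ W₁ := ⟨⟨hxU, by simp [hm_def]; linarith⟩, hDG hx⟩
  have hW₁U : W₁ ⊆ U := fun z hz => hz.1.1
  have hW₁A : ∀ z ∈ W₁, m < A z := fun z hz => hz.1.2
  have hW₁G : W₁ ⊆ G := fun z hz => hz.2
  -- first tube neighbourhood
  obtain ⟨δ, hδ, V, hVopen, hxV, hV⟩ :=
    flow_nbhd hφcont hW₁open (by rw [hφ0]; exact hxW₁)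
  -- compact neighbourhood C of x inside V
  obtain ⟨C, hCcomp, hxC, hCV⟩ := exists_compact_subset hVopen hxV
  -- second tube neighbourhood
  have hW₂open : IsOpen (interior C ∩ W₁) := isOpen_interior.inter hW₁open
  obtain ⟨lam0, hlam0, N, hNopen, hxN, hN⟩ :=
    flow_nbhd hφcont hW₂open (by rw [hφ0]; exact ⟨hxC, hxW₁⟩)
  set lam : ℝ := min lam0 (δ / 2) with hlam_def
  have hlam : 0 < lam := lt_min hlam0 (by linarith)
  have hlamlam0 : lam ≤ lam0 := min_le_left _ _
  have hlamδ : 2 * lam ≤ δ := by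
    have := min_le_right lam0 (δ / 2); linarith
  -- flow maps are continuous and injective
  have hφt : ∀ t : ℝ, Continuous (φ t) := fun t =>
    hφcont.comp (Continuous.prodMk_right t)
  have hcancel : ∀ (t : ℝ) (y : M), φ (-t) (φ t y) = y := by
    intro t y
    rw [← hφadd, neg_add_cancel, hφ0]
  have hinj : ∀ (t : ℝ) {y z : M}, φ t y = φ t z → y = z := by
    intro t y z h
    have h2 := congrArg (φ (-t)) h
    rwa [hcancel, hcancel] at h2
  set L : Set M := φ lam '' (D ∩ C) with hL_def
  have hDCcomp : IsCompact (D ∩ C) := hCcomp.inter_left hDclosed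
  have hLcomp : IsCompact L := hDCcomp.image (hφt lam)
  have hS : φ lam ⁻¹' L = D ∩ C := by
    ext y
    constructor
    · rintro ⟨y', hy', hEq⟩
      rwa [← hinj lam hEq]
    · intro hy
      exact ⟨y, hy, rfl⟩
  -- value of Φ on D near x
  have hΦD : ∀ y ∈ D, y ∈ U → Φ y = c := by
    intro y hy hyU
    have : y ∈ U ∩ Φ ⁻¹' {c} := hlevel ▸ (⟨hy, hyU⟩ : y ∈ D ∩ U)
    exact this.2
  have hΦtoD : ∀ z ∈ U, Φ z = c → z ∈ D := by
    intro z hz h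
    have : z ∈ D ∩ U := hlevel.symm ▸ (⟨hz, h⟩ : z ∈ U ∩ Φ ⁻¹' {c})
    exact this.1
  -- key quantitative estimate along the flow
  have hkey : ∀ (y : M) (a b : ℝ), a ≤ b → (∀ τ, a ≤ τ → τ ≤ b → φ τ y ∈ W₁) →
      m * (b - a) ≤ Φ (φ b y) - Φ (φ a y) := by
    intro y a b hab hin
    have hC : ∀ τ ∈ Icc a b, HasDerivAt (fun s => Φ (φ s y)) (A (φ τ y)) τ :=
      fun τ hτ => hDer y τ (hW₁U (hin τ hτ.1 hτ.2))
    have := (convex_Icc a b).mul_sub_le_image_sub_of_le_deriv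
      (f := fun s => Φ (φ s y)) (C := m)
      (fun τ hτ => (hC τ hτ).continuousAt.continuousWithinAt)
      (fun τ hτ => ((hC τ (interior_subset hτ)).differentiableAt).differentiableWithinAt)
      (fun τ hτ => by
        rw [(hC τ (interior_subset hτ)).deriv]
        have hτ' : τ ∈ Icc a b := interior_subset hτ
        exact le_of_lt (hW₁A _ (hin τ hτ'.1 hτ'.2)))
      a (left_mem_Icc.2 hab) b (right_mem_Icc.2 hab) hab
    exact this
  have hCU : C ⊆ U := fun z hz => hW₁U (by
    have := hV z (hCV hz) 0 (by simp; linarith)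
    rwa [hφ0] at this)
  refine ⟨lam, L, ⟨hlam, hLcomp.isClosed, ?_, ?_, ?_, ?_⟩, ?_, ?_⟩
  · -- S closed
    rw [hS]; exact hDclosed.inter hCcomp.isClosed
  · -- x ∈ S
    rw [hS]; exact ⟨hx, interior_subset hxC⟩
  · -- tube ∈ 𝓝 x
    rw [mem_nhds_iff]
    refine ⟨N ∩ (U ∩ Φ ⁻¹' Ioo (c - m * lam) (c + m * lam)), ?_, ?_, ?_⟩
    · -- subset of tube
      rintro w ⟨hwN, hwU, hwΦ⟩
      simp only [mem_preimage, mem_Ioo] at hwΦ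
      have hwin : ∀ s : ℝ, |s| ≤ lam → φ s w ∈ interior C ∩ W₁ := fun s hs =>
        hN w hwN s (le_trans hs hlamlam0)
      have hb1 : m * lam ≤ Φ (φ lam w) - Φ w := by
        have := hkey w 0 lam hlam.le (fun τ h1 h2 => (hwin τ (by rw [abs_le]; constructor <;> linarith)).2)
        rw [hφ0] at this
        simpa using this
      have hb2 : m * lam ≤ Φ w - Φ (φ (-lam) w) := by
        have := hkey w (-lam) 0 (by linarith) (fun τ h1 h2 => (hwin τ (by rw [abs_le]; constructor <;> linarith)).2)
        rw [hφ0] at this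
        simpa using this
      have hcont : ContinuousOn (fun s => Φ (φ s w)) (Icc (-lam) lam) := by
        intro τ hτ
        have : φ τ w ∈ W₁ := (hwin τ (abs_le.mpr ⟨hτ.1, hτ.2⟩)).2
        exact (hDer w τ (hW₁U this)).continuousAt.continuousWithinAt
      have hcc : c ∈ Icc (Φ (φ (-lam) w)) (Φ (φ lam w)) := by
        constructor <;> nlinarith
      obtain ⟨s, hs, hsc⟩ := intermediate_value_Icc (by linarith : -lam ≤ lam) hcont hcc
      have hsabs : |s| ≤ lam := abs_le.mpr ⟨hs.1, hs.2⟩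
      have hz : φ s w ∈ interior C ∩ W₁ := hwin s hsabs
      have hzD : φ s w ∈ D := hΦtoD _ (hW₁U hz.2) hsc
      refine ⟨lam + s, by linarith [hs.1], by linarith [hs.2], ?_⟩
      exact ⟨φ s w, ⟨hzD, interior_subset hz.1⟩, (hφadd lam s w).symm⟩
    · exact hNopen.inter ((hΦ.continuousOn).isOpen_inter_preimage hUopen isOpen_Ioo)
    · refine ⟨hxN, hxU, ?_⟩
      simp only [mem_preimage, mem_Ioo, hΦx]
      constructor <;> nlinarith
  · -- disjointness of time slices
    intro ν ζ hν hνζ hζ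
    rw [Set.eq_empty_iff_forall_notMem]
    rintro y ⟨h1, h2⟩
    obtain ⟨a, haDC, ha⟩ := h1
    obtain ⟨b, hbDC, hb⟩ := h2
    have e1 : φ (ζ - ν) (φ lam a) = φ (ζ - ν) (φ ν y) := by rw [ha]
    rw [← hφadd, ← hφadd, show ζ - ν + ν = ζ from by ring,
      show ζ - ν + lam = lam + (ζ - ν) from by ring, hφadd] at e1
    have hba : b = φ (ζ - ν) a := hinj lam (hb.trans e1.symm)
    have haV : a ∈ V := hCV haDC.2
    have hsub : ∀ τ, 0 ≤ τ → τ ≤ ζ - ν → φ τ a ∈ W₁ := by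
      intro τ hτ1 hτ2
      exact hV a haV τ (by rw [abs_le]; constructor <;> linarith)
    have := hkey a 0 (ζ - ν) (by linarith) hsub
    rw [hφ0, ← hba] at this
    have hΦa : Φ a = c := hΦD a haDC.1 (hCU haDC.2)
    have hΦb : Φ b = c := hΦD b hbDC.1 (hCU hbDC.2)
    rw [hΦa, hΦb] at this
    nlinarith
  · -- S = tube ∩ D
    rw [hS]
    ext y
    constructor
    · intro hy
      exact ⟨⟨lam, hlam.le, by linarith, ⟨y, hy, rfl⟩⟩, hy.1⟩
    · rintro ⟨⟨t, ht0, ht2, hLmem⟩, hyD⟩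
      obtain ⟨a, haDC, ha⟩ := hLmem
      have hya : y = φ (lam - t) a := by
        have e1 : φ t y = φ t (φ (lam - t) a) := by
          rw [← hφadd, show t + (lam - t) = lam from by ring, ha]
        exact hinj t e1
      have haV : a ∈ V := hCV haDC.2
      have habs : ∀ τ : ℝ, |τ| ≤ lam → φ τ a ∈ W₁ := fun τ hτ =>
        hV a haV τ (le_trans hτ (by linarith))
      have hyU : y ∈ U := by
        rw [hya]
        exact hW₁U (habs (lam - t) (by rw [abs_le]; constructor <;> linarith))
      have hΦy : Φ y = c := hΦD y hyD hyU
      have hΦa : Φ a = c := hΦD a haDC.1 (hCU haDC.2)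
      rcases lt_trichotomy (lam - t) 0 with hr | hr | hr
      · exfalso
        have hcond : ∀ τ, lam - t ≤ τ → τ ≤ 0 → φ τ a ∈ W₁ := fun τ h1 h2 =>
          habs τ (by rw [abs_le]; constructor <;> linarith)
        have := hkey a (lam - t) 0 hr.le hcond
        rw [hφ0, ← hya, hΦy, hΦa] at this
        nlinarith
      · have ht : t = lam := by linarith
        rw [hr, hφ0] at hya
        rw [hya]; exact haDC
      · exfalso
        have hcond : ∀ τ, 0 ≤ τ → τ ≤ lam - t → φ τ a ∈ W₁ := fun τ h1 h2 =>
          habs τ (by rw [abs_le]; constructor <;> linarith)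
        have := hkey a 0 (lam - t) hr.le hcond
        rw [hφ0, ← hya, hΦy, hΦa] at this
        nlinarith
  · -- tube ∩ I '' D = ∅
    rw [Set.eq_empty_iff_forall_notMem]
    rintro y ⟨⟨t, ht0, htlam, hLmem⟩, hyI⟩
    obtain ⟨a, haDC, ha⟩ := hLmem
    have hya : y = φ (lam - t) a := by
      have e1 : φ t y = φ t (φ (lam - t) a) := by
        rw [← hφadd, show t + (lam - t) = lam from by ring, ha]
      exact hinj t e1
    have haV : a ∈ V := hCV haDC.2
    have : φ (lam - t) a ∈ W₁ := by
      apply hV a haV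
      rw [abs_le]; constructor <;> linarith
    rw [← hya] at this
    exact hW₁G this hyI

/-- Let M be a compact boundaryless smooth manifold, f a C¹ vector field
on M with complete flow φ, D ⊆ M a nonempty compact codimension-one submanifold
transversal to the flow direction, and I : D → M continuous with I(D) ∩ D = ∅. Then
every point x ∈ D satisfies the special strong tube condition. -/
theorem stmt_1 {E : Type*} [NormedAddCommGroup E] [NormedSpace ℝ E]
    [FiniteDimensional ℝ E]
    {H : Type*} [TopologicalSpace H] {J : ModelWithCorners ℝ E H} [J.Boundaryless]
    {M : Type*} [TopologicalSpace M] [CompactSpace M] [T2Space M] [ChartedSpace H M]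
    [IsManifold J (⊤ : ℕ∞) M]
    (f : (x : M) → TangentSpace J x)
    (hf : ContMDiff J J.tangent 1 (fun x : M => (⟨x, f x⟩ : TangentBundle J M)))
    (φ : ℝ → M → M)
    (hφcont : Continuous fun p : ℝ × M => φ p.1 p.2)
    (hφ0 : ∀ x, φ 0 x = x)
    (hφadd : ∀ t s : ℝ, ∀ x, φ (t + s) x = φ t (φ s x))
    (hφint : ∀ x : M, IsMIntegralCurve (fun t => φ t x) f)
    (D : Set M) (hD : D.Nonempty) (hDcomp : IsCompact D)
    (hDtrans : TransversalCodimOne J f D)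
    (I : M → M) (hIcont : ContinuousOn I D) (hID : (I '' D) ∩ D = ∅) :
    ∀ x ∈ D, satisfiesSSTC φ D I x := by
  intro x hx
  obtain ⟨U, Φ, c, hUopen, hxU, hΦ, hlevel, hA⟩ := hDtrans x hx
  have hIDcl : IsClosed (I '' D) := (hDcomp.image_of_continuousOn hIcont).isClosed
  set A : M → ℝ := fun z => (mfderiv J 𝓘(ℝ, ℝ) Φ z (f z) : ℝ) with hA_def
  have hAeq : ∀ z, A z = mfderiv J 𝓘(ℝ, ℝ) Φ z (f z) := fun z => rfl
  have hAx : A x ≠ 0 := hA x ⟨hx, hxU⟩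
  rcases hAx.lt_or_gt with hneg | hpos
  · refine aux_sstc f hf φ hφcont hφ0 hφadd hφint D hDcomp.isClosed I hIDcl hID x hx
      U (-Φ) (-c) hUopen hxU hΦ.neg ?_ (fun z => -(A z)) ?_ ?_
    · rw [hlevel]
      ext z
      simp only [mem_inter_iff, mem_preimage, mem_singleton_iff, Pi.neg_apply, neg_inj]
    · intro z
      rw [mfderiv_neg]
      exact congrArg (fun r : ℝ => -r) (hAeq z)
    · show (0 : ℝ) < -(A x)
      linarith
  · exact aux_sstc f hf φ hφcont hφ0 hφadd hφint D hDcomp.isClosed I hIDcl hID x hx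
      U Φ c hUopen hxU hΦ hlevel A hAeq hpos
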